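/- Let c ≥ 0 be a real number. The function f₁(x, y) = log(1 + c/(x·y)) is convex on the convex set {(x, y) ∈ ℝ² : x > 0 and y > 0}. -/

import Mathlib

open Real Set

private lemma v_pos (c : ℝ) (hc : 0 ≤ c) (t : ℝ) : 0 < 1 + c * Real.exp (-t) := by
  positivity

private lemma g_hasDerivAt (c : ℝ) (hc : 0 ≤ c) (t : ℝ) :
    HasDerivAt (fun t => Real.log (1 + c * Real.exp (-t)))
      (-(c * Real.exp (-t)) / (1 + c * Real.exp (-t))) t := by
  have hv : HasDerivAt (fun t => 1 + c * Real.exp (-t)) (-(c * Real.exp (-t))) t := by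
    have h1 : HasDerivAt (fun t : ℝ => Real.exp (-t)) (-Real.exp (-t)) t := by
      simpa [Function.comp_def] using ((Real.hasDerivAt_exp (-t)).comp t (hasDerivAt_neg t))
    have := (h1.const_mul c).const_add 1
    simpa [mul_comm, mul_left_comm, mul_assoc] using this
  exact hv.log (v_pos c hc t).ne'

private lemma g_deriv (c : ℝ) (hc : 0 ≤ c) :
    deriv (fun t => Real.log (1 + c * Real.exp (-t)))
      = fun t => -(c * Real.exp (-t)) / (1 + c * Real.exp (-t)) := by
  funext t; exact (g_hasDerivAt c hc t).deriv

private lemma g_deriv_hasDerivAt (c : ℝ) (hc : 0 ≤ c) (t : ℝ) :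
    HasDerivAt (fun t => -(c * Real.exp (-t)) / (1 + c * Real.exp (-t)))
      ((c * Real.exp (-t)) / (1 + c * Real.exp (-t)) ^ 2) t := by
  have h1 : HasDerivAt (fun t : ℝ => Real.exp (-t)) (-Real.exp (-t)) t := by
    simpa [Function.comp_def] using ((Real.hasDerivAt_exp (-t)).comp t (hasDerivAt_neg t))
  have hu : HasDerivAt (fun t => -(c * Real.exp (-t))) (c * Real.exp (-t)) t := by
    have := ((h1.const_mul c).neg)
    simpa [Pi.neg_def, mul_comm, mul_left_comm, mul_assoc] using this
  have hv : HasDerivAt (fun t => 1 + c * Real.exp (-t)) (-(c * Real.exp (-t))) t := by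
    have := (h1.const_mul c).const_add 1
    simpa [mul_comm, mul_left_comm, mul_assoc] using this
  have := hu.div hv (v_pos c hc t).ne'
  simp only [Pi.div_def] at this
  refine this.congr_deriv ?_
  have h := (v_pos c hc t).ne'
  ring

private lemma g_convex (c : ℝ) (hc : 0 ≤ c) :
    ConvexOn ℝ univ (fun t => Real.log (1 + c * Real.exp (-t))) := by
  apply convexOn_univ_of_deriv2_nonneg
  · exact fun t => (g_hasDerivAt c hc t).differentiableAt
  · intro t
    rw [g_deriv c hc]
    exact (g_deriv_hasDerivAt c hc t).differentiableAt
  · intro t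
    have : deriv^[2] (fun t => Real.log (1 + c * Real.exp (-t))) t
        = (c * Real.exp (-t)) / (1 + c * Real.exp (-t)) ^ 2 := by
      simp only [Function.iterate_succ, Function.iterate_zero, Function.comp_apply, id_eq]
      rw [g_deriv c hc]
      exact (g_deriv_hasDerivAt c hc t).deriv
    rw [this]
    positivity

private lemma g_antitone (c : ℝ) (hc : 0 ≤ c) :
    Antitone (fun t => Real.log (1 + c * Real.exp (-t))) := by
  intro s t hst
  apply Real.log_le_log (v_pos c hc t)
  have : Real.exp (-t) ≤ Real.exp (-s) := Real.exp_le_exp.2 (by linarith)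
  nlinarith

/-- Composition of a convex antitone function with a concave function is convex. -/
private lemma comp_convex {S : Set (ℝ × ℝ)} {g : ℝ → ℝ} {h : ℝ × ℝ → ℝ}
    (hg : ConvexOn ℝ univ g) (hg' : Antitone g) (hh : ConcaveOn ℝ S h) :
    ConvexOn ℝ S (fun p => g (h p)) := by
  refine ⟨hh.1, fun x hx y hy a b ha hb hab => ?_⟩
  calc g (h (a • x + b • y)) ≤ g (a • h x + b • h y) :=
        hg' (hh.2 hx hy ha hb hab)
    _ ≤ a • g (h x) + b • g (h y) :=
        hg.2 (mem_univ _) (mem_univ _) ha hb hab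

private lemma h_concave :
    ConcaveOn ℝ {p : ℝ × ℝ | 0 < p.1 ∧ 0 < p.2}
      (fun p : ℝ × ℝ => Real.log p.1 + Real.log p.2) := by
  have hS : Convex ℝ {p : ℝ × ℝ | 0 < p.1 ∧ 0 < p.2} :=
    (convex_Ioi (0:ℝ)).prod (convex_Ioi (0:ℝ))
  have hlog : ConcaveOn ℝ (Ioi (0:ℝ)) Real.log := strictConcaveOn_log_Ioi.concaveOn
  have h1 : ConcaveOn ℝ ((LinearMap.fst ℝ ℝ ℝ) ⁻¹' (Ioi 0))
      (Real.log ∘ (LinearMap.fst ℝ ℝ ℝ)) := hlog.comp_linearMap _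
  have h2 : ConcaveOn ℝ ((LinearMap.snd ℝ ℝ ℝ) ⁻¹' (Ioi 0))
      (Real.log ∘ (LinearMap.snd ℝ ℝ ℝ)) := hlog.comp_linearMap _
  have h1' := h1.subset (fun p hp => hp.1) hS
  have h2' := h2.subset (fun p hp => hp.2) hS
  exact h1'.add h2'

open Real

/-- Joint convexity of `f₁(x, y) = log(1 + c/(x y))` on the open positive quadrant
(equation (27) of the paper). -/
theorem log_one_add_div_mul_convexOn (c : ℝ) (hc : 0 ≤ c) :
    ConvexOn ℝ {p : ℝ × ℝ | 0 < p.1 ∧ 0 < p.2}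
      (fun p : ℝ × ℝ => Real.log (1 + c / (p.1 * p.2))) := by
  have := comp_convex (g_convex c hc) (g_antitone c hc) h_concave
  refine this.congr fun p hp => ?_
  obtain ⟨hx, hy⟩ := hp
  have : Real.exp (-(Real.log p.1 + Real.log p.2)) = (p.1 * p.2)⁻¹ := by
    rw [Real.exp_neg, Real.exp_add, Real.exp_log hx, Real.exp_log hy]
  simp only [this, div_eq_mul_inv]
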